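/- Let f be an irreducible Weierstrass polynomial of degree n with Puiseux characteristic (b₀,...,b_g), and let γ, γ_j be two Newton–Puiseux roots of f with γ_j obtained from γ by the substitution x^{1/n} ↦ ω_j x^{1/n} for an n-th root of unity ω_j. Then ord_x(γ - γ_j) ≥ b_{k+1}/b₀ if and only if ω_j is an l_k-th root of unity, where l_k = gcd(b₀,...,b_k). -/

import Mathlib

noncomputable section

open Polynomial

/-- The substitution `x^{1/n} ↦ ε·x^{1/n}` on fractional power series: it sends
`Σ a_{i} x^{i/n}` to `Σ a_{i} ε^{i} x^{i/n}` (here the exponent of `ε` at `x^q`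
is the integer `q·n`). -/
def twist (n : ℕ) (ε : ℂ) (γ : HahnSeries ℚ ℂ) : HahnSeries ℚ ℂ where
  coeff q := ε ^ (q * n : ℚ).num * γ.coeff q
  isPWO_support' := γ.isPWO_support.mono (by
    intro q hq
    simp only [Function.mem_support] at hq ⊢
    intro h
    simp [h] at hq)

/-- Let `f` be an irreducible Weierstrass polynomial of degree `n = b₀` with Puiseux
characteristic `(b₀,...,b_g)` (characterized on the root `γ` by: `b_{k+1}` is the smallest
exponent `i` in the support of `γ` not divisible by `l_k = gcd(b₀,...,b_k)`).  Let `γ_j` be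
the root obtained from `γ` by `x^{1/n} ↦ ω_j x^{1/n}`, `ω_j^n = 1`.  Then
`ord_x(γ - γ_j) ≥ b_{k+1}/b₀` if and only if `ω_j` is an `l_k`-th root of unity. -/
theorem contact_order_iff_root_of_unity (n g : ℕ) (hn : 0 < n) (hg : 1 ≤ g)
    (f : Polynomial (PowerSeries ℂ)) (hmonic : f.Monic) (hdeg : f.natDegree = n)
    (hW : ∀ j, j < n → PowerSeries.constantCoeff (f.coeff j) = 0)
    (hirr : Irreducible f)
    (γ : HahnSeries ℚ ℂ)
    (hγsupp : γ.support ⊆ {q : ℚ | ∃ i : ℕ, 1 ≤ i ∧ q = (i : ℚ) / n})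
    (hγ : Polynomial.eval₂ (HahnSeries.ofPowerSeries ℚ ℂ) γ f = 0)
    (b l : ℕ → ℕ)
    (hb0 : b 0 = n) (hl0 : l 0 = n)
    (hl : ∀ m, m < g → l (m + 1) = Nat.gcd (l m) (b (m + 1)))
    (hlg : l g = 1)
    (hchar : ∀ m, m < g →
      ({i : ℕ | γ.coeff ((i : ℚ) / n) ≠ 0 ∧ ¬ l m ∣ i}.Nonempty ∧
       b (m + 1) = sInf {i : ℕ | γ.coeff ((i : ℚ) / n) ≠ 0 ∧ ¬ l m ∣ i}))
    (k : ℕ) (hk : k < g) (ωj : ℂ) (hωj : ωj ^ n = 1) :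
    (∀ q : ℚ, (γ - twist n ωj γ).coeff q ≠ 0 → (b (k + 1) : ℚ) / n ≤ q) ↔
      ωj ^ (l k) = 1 := by
  classical
  have hnpos : (0:ℚ) < n := by exact_mod_cast hn
  have hn0 : (n:ℚ) ≠ 0 := ne_of_gt hnpos
  -- coefficient of the twist at i/n
  have htw : ∀ i : ℕ, (twist n ωj γ).coeff ((i:ℚ)/n) = ωj ^ i * γ.coeff ((i:ℚ)/n) := by
    intro i
    show ωj ^ (((i:ℚ)/n * n : ℚ)).num * _ = _
    rw [div_mul_cancel₀ _ hn0]
    norm_num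
  -- divisibility chain for l
  have hld : ∀ m, m < g → l (m+1) ∣ l m := by
    intro m hm; rw [hl m hm]; exact Nat.gcd_dvd_left _ _
  have hchain : ∀ m m', m ≤ m' → m' ≤ g → l m' ∣ l m := by
    intro m m' h hg'
    induction m' with
    | zero => have : m = 0 := Nat.le_zero.mp h; simp [this]
    | succ t ih =>
      rcases Nat.lt_or_ge m (t+1) with h1 | h2
      · exact (hld t (by omega)).trans (ih (by omega) (by omega))
      · have : m = t + 1 := le_antisymm h h2
        simp [this]
  have hbmem : ∀ m, m < g →
      γ.coeff ((b (m+1) : ℚ)/n) ≠ 0 ∧ ¬ l m ∣ b (m+1) := by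
    intro m hm
    have h1 := (hchar m hm).1
    have h2 := (hchar m hm).2
    have := Nat.sInf_mem h1
    rw [← h2] at this
    exact this
  have hkey : ∀ m, m < g → ∀ i : ℕ, γ.coeff ((i:ℚ)/n) ≠ 0 → i < b (m+1) → l m ∣ i := by
    intro m hm i hc hi
    by_contra h
    have : b (m+1) ≤ i := by
      rw [(hchar m hm).2]
      exact Nat.sInf_le ⟨hc, h⟩
    omega
  constructor
  · -- ord ≥ b(k+1)/n → ωj^{l k} = 1
    intro H
    by_contra hne
    have hex : ∃ m, ωj ^ l m ≠ 1 := ⟨k, hne⟩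
    set m := Nat.find hex with hmdef
    have hmne : ωj ^ l m ≠ 1 := Nat.find_spec hex
    have hmk : m ≤ k := Nat.find_min' hex hne
    have hm1 : 1 ≤ m := by
      rcases Nat.eq_zero_or_pos m with h0 | h
      · exfalso; apply hmne; rw [h0, hl0]; exact hωj
      · exact h
    have hprev : ωj ^ l (m-1) = 1 := by
      by_contra h
      have := Nat.find_min' hex h
      omega
    have hmg : m - 1 < g := by omega
    have hm' : m - 1 + 1 = m := by omega
    have hlm : l m = Nat.gcd (l (m-1)) (b m) := by
      have := hl (m-1) hmg; rw [hm'] at this; exact this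
    have hbm : γ.coeff ((b m : ℚ)/n) ≠ 0 ∧ ¬ l (m-1) ∣ b m := by
      have := hbmem (m-1) hmg; rw [hm'] at this; exact this
    have hbne : ωj ^ b m ≠ 1 := by
      intro h
      apply hmne
      have h1 : orderOf ωj ∣ l (m-1) := orderOf_dvd_of_pow_eq_one hprev
      have h2 : orderOf ωj ∣ b m := orderOf_dvd_of_pow_eq_one h
      have h3 : orderOf ωj ∣ l m := by rw [hlm]; exact Nat.dvd_gcd h1 h2
      exact orderOf_dvd_iff_pow_eq_one.mp h3
    have hkm := hbmem k hk
    have hlt : b m < b (k+1) := by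
      have hsub : ¬ l (m-1) ∣ b (k+1) := by
        intro hdvd
        exact hkm.2 ((hchain (m-1) k (by omega) hk.le).trans hdvd)
      have hle : b m ≤ b (k+1) := by
        have h2 := (hchar (m-1) hmg).2
        rw [hm'] at h2
        rw [h2]
        exact Nat.sInf_le ⟨hkm.1, hsub⟩
      have hdv : l k ∣ b m :=
        (hchain m k hmk hk.le).trans (by rw [hlm]; exact Nat.gcd_dvd_right _ _)
      rcases hle.lt_or_eq with h | h
      · exact h
      · exact absurd (h ▸ hdv) hkm.2
    have hcoef : (γ - twist n ωj γ).coeff ((b m : ℚ)/n) ≠ 0 := by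
      rw [HahnSeries.coeff_sub, htw]
      intro h
      apply hbne
      have h1 := sub_eq_zero.mp h
      exact mul_right_cancel₀ hbm.1 (by rw [one_mul]; exact h1.symm)
    have := H _ hcoef
    have hle2 : (b (k+1) : ℚ) ≤ b m := by
      rwa [div_le_div_iff_of_pos_right hnpos] at this
    have : b (k+1) ≤ b m := by exact_mod_cast hle2
    omega
  · -- ωj^{l k} = 1 → ord ≥ b(k+1)/n
    intro hone q hq
    have hγc : γ.coeff q ≠ 0 := by
      intro h
      apply hq
      rw [HahnSeries.coeff_sub, h]
      show (0:ℂ) - ωj ^ (q * n : ℚ).num * γ.coeff q = 0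
      rw [h]; ring
    obtain ⟨i, hi1, rfl⟩ := hγsupp hγc
    rw [HahnSeries.coeff_sub, htw i] at hq
    have hωi : ωj ^ i ≠ 1 := by
      intro h; apply hq; rw [h, one_mul, sub_self]
    have hbi : b (k+1) ≤ i := by
      by_contra h
      push_neg at h
      have hdvd := hkey k hk i hγc h
      exact hωi (orderOf_dvd_iff_pow_eq_one.mp
        ((orderOf_dvd_of_pow_eq_one hone).trans hdvd))
    exact (div_le_div_iff_of_pos_right hnpos).mpr (by exact_mod_cast hbi)

end
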